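/- arXiv:1002.4319 — 3 statements merged into one kernel-verified Lean document; each statement's English description precedes it below -/
import Mathlib

section
/- Let k be a field, k_s its separable closure, V a finite-dimensional k-vector space, and H a group acting k-linearly on V. If V is a semisimple k[H]-module, then V ⊗_k k₁ is a semisimple k₁[H]-module for every intermediate field k ⊆ k₁ ⊆ k_s with k₁/k finite. -/
open TensorProduct

noncomputable def Representation.extendScalars {k V H : Type*} (k₁ : Type*)
    [CommRing k] [CommRing k₁] [Algebra k k₁] [AddCommGroup V] [Module k V] [Monoid H]
    (ρ : Representation k H V) : Representation k₁ H (k₁ ⊗[k] V) where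
  toFun h := LinearMap.baseChange k₁ (ρ h)
  map_one' := by ext v; simp
  map_mul' g h := by ext v; simp


section Auxiliary

open Polynomial Algebra

lemma dual_pair_exists (k K : Type*) [Field k] [Field K] [Algebra k K]
    [FiniteDimensional k K] [Algebra.IsSeparable k K] :
    ∃ (n : ℕ) (b c : Fin n → K),
      (∀ y : K, ∑ i, Algebra.trace k K (y * b i) • c i = y) ∧
      (∀ y : K, ∑ i, Algebra.trace k K (y * c i) • b i = y) ∧
      ∑ i, b i * c i = 1 := by
  classical
  obtain ⟨pb⟩ : Nonempty (PowerBasis k K) := ⟨Field.powerBasisOfFiniteOfSeparable k K⟩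
  set c := (Algebra.traceForm k K).dualBasis (traceForm_nondegenerate k K) pb.basis with hc
  refine ⟨pb.dim, pb.basis, c, ?_, ?_, ?_⟩
  · intro y
    conv_rhs => rw [← Module.Basis.sum_repr c y]
    refine Finset.sum_congr rfl fun i _ => ?_
    rw [LinearMap.BilinForm.dualBasis_repr_apply]
    rfl
  · intro y
    conv_rhs => rw [← Module.Basis.sum_repr pb.basis y]
    refine Finset.sum_congr rfl fun i _ => ?_
    congr 1
    have h2 : (Algebra.traceForm k K).dualBasis (traceForm_nondegenerate k K) c = pb.basis :=
      LinearMap.BilinForm.dualBasis_dualBasis (traceForm_nondegenerate k K)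
        (Algebra.traceForm_isSymm (R := k) (S := K)) pb.basis
    conv_rhs => rw [← h2]
    rw [LinearMap.BilinForm.dualBasis_repr_apply]
    rfl
  · -- the separability idempotent identity `∑ bᵢ cᵢ = 1`
    set d : K := Polynomial.aeval pb.gen (Polynomial.derivative (minpoly k pb.gen)) with hd
    have hint : IsIntegral k pb.gen := pb.isIntegral_gen
    have hd0 : d ≠ 0 := by
      have hsep : (minpoly k pb.gen).Separable := Algebra.IsSeparable.isSeparable k pb.gen
      obtain ⟨u, v, huv⟩ := hsep
      intro h0
      have := congrArg (Polynomial.aeval pb.gen) huv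
      simp [minpoly.aeval, ← hd, h0] at this
    have hlt : (minpolyDiv k pb.gen).natDegree < pb.dim := by
      have h1 := natDegree_minpolyDiv_succ hint (R := k) (x := pb.gen)
      have h2 := pb.natDegree_minpoly
      omega
    have key : ∑ i : Fin pb.dim, pb.gen ^ (i : ℕ) * (minpolyDiv k pb.gen).coeff i = d := by
      have := Polynomial.eval_eq_sum_range' hlt pb.gen (p := minpolyDiv k pb.gen)
      rw [eval_minpolyDiv_self, ← hd] at this
      rw [this, ← Fin.sum_univ_eq_sum_range]
      exact Finset.sum_congr rfl fun i _ => mul_comm _ _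
    have step : ∀ i : Fin pb.dim, pb.basis i * c i
        = pb.gen ^ (i : ℕ) * ((minpolyDiv k pb.gen).coeff i / d) := fun i => by
      rw [hc, ← Module.Basis.traceDual_def, Module.Basis.traceDual_powerBasis_eq, PowerBasis.coe_basis, hd]
    rw [Finset.sum_congr rfl fun i _ => step i]
    have : ∑ i : Fin pb.dim, pb.gen ^ (i : ℕ) * ((minpolyDiv k pb.gen).coeff i / d)
        = (∑ i : Fin pb.dim, pb.gen ^ (i : ℕ) * (minpolyDiv k pb.gen).coeff i) / d := by
      rw [Finset.sum_div]
      exact Finset.sum_congr rfl fun i _ => (mul_div_assoc _ _ _).symm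
    rw [this, key, div_self hd0]

lemma semisimple_transfer {k K A B N : Type*} [Field k] [Field K] [Algebra k K]
    [FiniteDimensional k K] [Algebra.IsSeparable k K]
    [Ring A] [Ring B] [Algebra k A] [Algebra k B] [Algebra K B] [IsScalarTower k K B]
    (f : A →ₐ[k] B)
    (hf : ∀ (S : Subalgebra K B), Set.range f ⊆ S → ∀ s : B, s ∈ S)
    [AddCommGroup N] [Module k N] [Module K N] [IsScalarTower k K N]
    [Module A N] [Module B N]
    (hKN : ∀ (a : K) (n : N), a • n = algebraMap K B a • n)
    (hAN : ∀ (a : A) (n : N), a • n = f a • n)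
    (hss : IsSemisimpleModule A N) :
    IsSemisimpleModule B N := by
  classical
  obtain ⟨n, b, c, h1, h2, h3⟩ := dual_pair_exists k K
  -- compatibility of k-smul with A-smul
  have hkA : ∀ (t : k) (x : N), t • x = algebraMap k A t • x := by
    intro t x
    rw [hAN, f.commutes, IsScalarTower.algebraMap_apply k K B, ← hKN,
      algebraMap_smul]
  -- K-smul commutes with B-smul
  have hKB : ∀ (a : K) (s : B) (m : N), a • s • m = s • a • m := by
    intro a s m
    rw [hKN, hKN, ← mul_smul, ← mul_smul, Algebra.commutes]
  -- k-smul commutes with K-smul (on N)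
  have hkK : ∀ (t : k) (a : K) (m : N), a • t • m = t • a • m := by
    intro t a m
    rw [← algebraMap_smul K t m, ← mul_smul, ← algebraMap_smul K t (a • m), ← mul_smul,
      mul_comm]
  refine (isSemisimpleModule_iff _ _).mpr ⟨?_⟩
  intro W
  -- W as an A-submodule
  let WA : Submodule A N :=
    { carrier := W
      add_mem' := fun hx hy => W.add_mem hx hy
      zero_mem' := W.zero_mem
      smul_mem' := fun a {x} hx => by
        show a • x ∈ W
        rw [hAN]; exact W.smul_mem (f a) hx }
  have hmem : ∀ {x : N}, x ∈ WA ↔ x ∈ W := Iff.rfl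
  obtain ⟨U, hU⟩ := exists_isCompl WA
  let π : N →ₗ[A] N := WA.subtype.comp (WA.linearProjOfIsCompl U hU)
  have hπ1 : ∀ x ∈ W, π x = x := fun x hx => by
    show ((WA.linearProjOfIsCompl U hU) x : N) = x
    exact congrArg Subtype.val (Submodule.linearProjOfIsCompl_apply_left hU ⟨x, hmem.mpr hx⟩)
  have hπ2 : ∀ x, π x ∈ W := fun x => hmem.mp ((WA.linearProjOfIsCompl U hU) x).2
  have hπk : ∀ (t : k) (x : N), π (t • x) = t • π x := by
    intro t x
    rw [hkA, π.map_smul, ← hkA]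
  -- the averaged projection
  set g : N → N := fun x => ∑ i, b i • π (c i • x) with hg
  have gadd : ∀ x y, g (x + y) = g x + g y := by
    intro x y
    simp only [hg, smul_add, map_add, ← Finset.sum_add_distrib]
  have hgK : ∀ (a : K) (x : N), g (a • x) = a • g x := by
    intro a x
    have step : ∀ i, π ((c i * a) • x)
        = ∑ j, Algebra.trace k K (c i * a * b j) • π (c j • x) := by
      intro i
      conv_lhs => rw [← h1 (c i * a)]
      rw [Finset.sum_smul, map_sum]
      exact Finset.sum_congr rfl fun j _ => by rw [smul_assoc, hπk]
    calc g (a • x) = ∑ i, b i • π ((c i * a) • x) := by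
          simp only [hg, ← mul_smul]
      _ = ∑ i, ∑ j, Algebra.trace k K (c i * a * b j) • (b i • π (c j • x)) := by
          refine Finset.sum_congr rfl fun i _ => ?_
          rw [step i, Finset.smul_sum]
          exact Finset.sum_congr rfl fun j _ => (hkK _ _ _)
      _ = ∑ j, (∑ i, Algebra.trace k K ((a * b j) * c i) • b i) • π (c j • x) := by
          rw [Finset.sum_comm]
          refine Finset.sum_congr rfl fun j _ => ?_
          rw [Finset.sum_smul]
          refine Finset.sum_congr rfl fun i _ => ?_
          rw [smul_assoc]
          congr 2
          ring
      _ = ∑ j, (a * b j) • π (c j • x) := by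
          refine Finset.sum_congr rfl fun j _ => ?_
          rw [h2 (a * b j)]
      _ = a • g x := by
          rw [hg, Finset.smul_sum]
          exact Finset.sum_congr rfl fun j _ => (mul_smul _ _ _)
  have hgf : ∀ (a : A) (x : N), g (f a • x) = f a • g x := by
    intro a x
    simp only [hg]
    rw [Finset.smul_sum]
    refine Finset.sum_congr rfl fun i _ => ?_
    rw [hKB (c i) (f a) x, ← hAN, π.map_smul, hAN, hKB]
  have hB' : ∀ (s : B) (x : N), g (s • x) = s • g x := by
    have : ∀ s : B, s ∈
      ({ carrier := {s : B | ∀ x, g (s • x) = s • g x}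
         mul_mem' := fun {s t} hs ht x => by
           rw [mul_smul, hs, ht, mul_smul]
         one_mem' := fun x => by rw [one_smul, one_smul]
         add_mem' := fun {s t} hs ht x => by
           rw [add_smul, gadd, hs, ht, add_smul]
         zero_mem' := fun x => by
           have : g 0 = 0 := by simp [hg]
           rw [zero_smul, this, zero_smul]
         algebraMap_mem' := fun a x => by
           rw [← hKN, hgK, hKN] } : Subalgebra K B) := by
      refine hf _ ?_
      rintro _ ⟨a, rfl⟩
      exact fun x => hgf a x
    exact fun s => this s
  have hgW : ∀ x, g x ∈ W := by
    intro x
    refine Submodule.sum_mem W fun i _ => ?_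
    rw [hKN]
    exact W.smul_mem _ (hπ2 _)
  have hgid : ∀ x ∈ W, g x = x := by
    intro x hx
    have : ∀ i, π (c i • x) = c i • x := fun i => by
      refine hπ1 _ ?_
      rw [hKN]; exact W.smul_mem _ hx
    calc g x = ∑ i, (b i * c i) • x := by
          simp only [hg]
          exact Finset.sum_congr rfl fun i _ => by rw [this i, ← mul_smul]
      _ = x := by rw [← Finset.sum_smul, h3, one_smul]
  let gB : N →ₗ[B] N :=
    { toFun := g
      map_add' := gadd
      map_smul' := fun s x => hB' s x }
  have hproj : LinearMap.IsProj W gB := ⟨hgW, hgid⟩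
  exact ⟨_, hproj.isCompl⟩

end Auxiliary

set_option maxHeartbeats 4000000 in
set_option synthInstance.maxHeartbeats 800000 in
/-- If `V` is a semisimple `k[H]`-module, then for every finite subextension `k₁`
of the separable closure `kₛ` of `k`, the module `V ⊗[k] k₁` is a semisimple
`k₁[H]`-module. -/
theorem semisimple_extendScalars_of_semisimple_of_finite_subext_sepClosure
    {k ks V H : Type*} [Field k] [Field ks] [Algebra k ks] [IsSepClosure k ks]
    [AddCommGroup V] [Module k V] [FiniteDimensional k V] [Group H]
    (ρ : Representation k H V)
    (hss : IsSemisimpleModule (MonoidAlgebra k H) ρ.asModule)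
    (k₁ : IntermediateField k ks) (hfin : FiniteDimensional k k₁) :
    IsSemisimpleModule (MonoidAlgebra k₁ H) (ρ.extendScalars k₁).asModule := by
  classical
  haveI := hfin
  haveI : Algebra.IsSeparable k ks := IsSepClosure.separable
  haveI : Algebra.IsSeparable k k₁ := Algebra.isSeparable_tower_bot_of_isSeparable k k₁ ks
  let N := (ρ.extendScalars (k₁ : Type _)).asModule
  letI : Module k N := (inferInstance : Module k ((k₁ : Type _) ⊗[k] V))
  letI : IsScalarTower k k₁ N :=
    (inferInstance : IsScalarTower k k₁ ((k₁ : Type _) ⊗[k] V))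
  let f : MonoidAlgebra k H →ₐ[k] MonoidAlgebra k₁ H :=
    MonoidAlgebra.lift k (MonoidAlgebra k₁ H) H (MonoidAlgebra.of k₁ H)
  letI : Module (MonoidAlgebra k H) N :=
    Module.compHom N (f.toRingHom : MonoidAlgebra k H →+* MonoidAlgebra k₁ H)
  have L1 : ∀ (a : MonoidAlgebra k H) (c : k₁) (v : V),
      (ρ.extendScalars (k₁ : Type _)).asAlgebraHom (f a) (c ⊗ₜ[k] v)
        = c ⊗ₜ[k] (ρ.asAlgebraHom a v) := by
    intro a
    induction a using MonoidAlgebra.induction_on with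
    | of g =>
      intro c v
      have hf : f (MonoidAlgebra.of k H g) = MonoidAlgebra.of k₁ H g := by
        simp [f]
      rw [hf, Representation.asAlgebraHom_of, Representation.asAlgebraHom_of]
      rfl
    | add x y hx hy =>
      intro c v
      simp only [map_add, LinearMap.add_apply, hx, hy, TensorProduct.tmul_add]
    | smul r x hx =>
      intro c v
      have e1 : f (r • x) = algebraMap k ↥k₁ r • f x := by
        rw [map_smul, algebraMap_smul]
      have e2 : ρ.asAlgebraHom (r • x) = r • ρ.asAlgebraHom x := map_smul _ r x
      have e3 : (ρ.extendScalars (k₁ : Type _)).asAlgebraHom (algebraMap k ↥k₁ r • f x)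
          = algebraMap k ↥k₁ r • (ρ.extendScalars (k₁ : Type _)).asAlgebraHom (f x) :=
        LinearMap.map_smul ((ρ.extendScalars (k₁ : Type _)).asAlgebraHom.toLinearMap)
          (algebraMap k ↥k₁ r) (f x)
      rw [e1, e3, LinearMap.smul_apply, algebraMap_smul, e2, LinearMap.smul_apply, hx,
        tmul_smul]
  have hKN : ∀ (a : k₁) (n : N), a • n = algebraMap k₁ (MonoidAlgebra k₁ H) a • n := by
    intro a n
    have h : algebraMap ↥k₁ (MonoidAlgebra ↥k₁ H) a • n
        = (ρ.extendScalars (k₁ : Type _)).asAlgebraHom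
            (algebraMap ↥k₁ (MonoidAlgebra ↥k₁ H) a) n := rfl
    rw [h, AlgHom.commutes]
    exact (Module.algebraMap_end_apply k₁ k₁ ((k₁ : Type _) ⊗[k] V) a n).symm
  haveI := hss
  have hssA : IsSemisimpleModule (MonoidAlgebra k H) N := by
    let φ : k₁ → (ρ.asModule →ₗ[MonoidAlgebra k H] N) := fun c =>
      { toFun := fun v => (c ⊗ₜ[k] v : (k₁ : Type _) ⊗[k] V)
        map_add' := fun v w => TensorProduct.tmul_add c v w
        map_smul' := fun a v => (L1 a c v).symm }
    refine isSemisimpleModule_of_isSemisimpleModule_submodule'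
      (p := fun c => LinearMap.range (φ c)) (fun c => by exact IsSemisimpleModule.range (R := MonoidAlgebra k H) (M := ρ.asModule) (N := N) (φ c)) ?_
    rw [eq_top_iff]
    rintro x -
    have key : ∀ y : (k₁ : Type _) ⊗[k] V,
        (show N from y) ∈ ⨆ c : k₁, LinearMap.range (φ c) := by
      intro y
      induction y using TensorProduct.induction_on with
      | zero => exact zero_mem _
      | tmul c v => exact Submodule.mem_iSup_of_mem c ⟨v, rfl⟩
      | add y z hy hz => exact add_mem hy hz
    exact key x
  have hfgen : ∀ (S : Subalgebra k₁ (MonoidAlgebra k₁ H)),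
      Set.range f ⊆ S → ∀ s, s ∈ S := by
    intro S hS s
    induction s using MonoidAlgebra.induction_on with
    | of g => exact hS ⟨MonoidAlgebra.of k H g, by simp [f]⟩
    | add x y hx hy => exact S.add_mem hx hy
    | smul r x hx => exact S.smul_mem hx r
  exact semisimple_transfer f hfgen hKN (fun a n => rfl) hssA
end

section
/- Let V be a finite-dimensional vector space over a field k and H a group acting k-linearly on V. Suppose there is a chain of H-stable subspaces 0 = V₀ ⊂ V₁ ⊂ ⋯ ⊂ V_n = V (a 'flag' stabilized by H). Then V is a semisimple k[H]-module if and only if for every H-stable flag there exists an H-stable direct sum decomposition V = W₁ ⊕ ⋯ ⊕ W_n with V_i = W₁ ⊕ ⋯ ⊕ W_i for all i. -/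
open Submodule

section IndepHelper

variable {R M : Type*} [Ring R] [AddCommGroup M] [Module R M]

private lemma disjoint_sup_aux {a s l f : Submodule R M} (has : Disjoint a s)
    (hlf : Disjoint l f) (haf : a ≤ f) (hsf : s ≤ f) : Disjoint a (s ⊔ l) := by
  have key : (s ⊔ l) ⊓ f = s := by
    rw [sup_inf_assoc_of_le _ hsf, hlf.eq_bot, sup_bot_eq]
  rw [disjoint_iff, ← le_bot_iff, ← has.eq_bot]
  refine le_inf inf_le_left ?_
  calc a ⊓ (s ⊔ l) ≤ f ⊓ (s ⊔ l) := inf_le_inf_right _ haf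
    _ = s := by rw [inf_comm, key]

private lemma indep_of_flag : ∀ (n : ℕ) (F : Fin (n + 1) → Submodule R M), Monotone F →
    ∀ W : Fin n → Submodule R M, (∀ i, W i ≤ F i.succ) →
    (∀ i, Disjoint (W i) (F i.castSucc)) → iSupIndep W := by
  intro n
  induction n with
  | zero => exact fun _ _ _ _ _ i => i.elim0
  | succ n ih =>
    intro F hF W hle hdis
    have ihW : iSupIndep fun j : Fin n => W j.castSucc := by
      refine ih (fun j => F j.castSucc) (fun a b hab => hF (by simpa using hab))
        (fun j => W j.castSucc) (fun j => ?_) (fun j => ?_)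
      · show W j.castSucc ≤ F (j.succ).castSucc
        rw [show (j.succ).castSucc = (j.castSucc).succ from (Fin.succ_castSucc j).symm]
        exact hle j.castSucc
      · exact hdis j.castSucc
    intro i
    refine Fin.lastCases ?_ ?_ i
    · refine (hdis (Fin.last n)).mono_right (iSup₂_le fun j hj => ?_)
      obtain ⟨m, rfl⟩ := Fin.exists_castSucc_eq.2 hj
      refine (hle m.castSucc).trans (hF ?_)
      simp only [Fin.le_def, Fin.val_succ, Fin.coe_castSucc, Fin.val_last]
      omega
    · intro i'
      have hS_le : (⨆ (j : Fin n) (_ : j ≠ i'), W j.castSucc) ≤ F (Fin.last n).castSucc := by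
        refine iSup₂_le fun m _ => (hle m.castSucc).trans (hF ?_)
        simp only [Fin.le_def, Fin.val_succ, Fin.coe_castSucc, Fin.val_last]
        omega
      have ha_le : W i'.castSucc ≤ F (Fin.last n).castSucc := by
        refine (hle i'.castSucc).trans (hF ?_)
        simp only [Fin.le_def, Fin.val_succ, Fin.coe_castSucc, Fin.val_last]
        omega
      have main : Disjoint (W i'.castSucc)
          ((⨆ (j : Fin n) (_ : j ≠ i'), W j.castSucc) ⊔ W (Fin.last n)) :=
        disjoint_sup_aux (ihW i') (hdis (Fin.last n)) ha_le hS_le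
      refine main.mono_right (iSup₂_le fun j hj => ?_)
      by_cases hjl : j = Fin.last n
      · subst hjl; exact le_sup_right
      · obtain ⟨m, rfl⟩ := Fin.exists_castSucc_eq.2 hjl
        exact le_sup_of_le_left
          (le_iSup₂ (f := fun (j : Fin n) (_ : j ≠ i') => W j.castSucc) m
            (fun e => hj (by rw [e])))

end IndepHelper

section Corr

variable {k V H : Type*} [Field k] [AddCommGroup V] [Module k V] [Group H]
  (ρ : Representation k H V)

private lemma asAlgebraHom_mem (p : Submodule k V)
    (hp : ∀ h : H, ∀ v ∈ p, ρ h v ∈ p) (r : MonoidAlgebra k H) {x : V} (hx : x ∈ p) :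
    ρ.asAlgebraHom r x ∈ p := by
  induction r using MonoidAlgebra.induction_on with
  | of g => rw [Representation.asAlgebraHom_of]; exact hp g x hx
  | add f g hf hg => rw [map_add, LinearMap.add_apply]; exact p.add_mem hf hg
  | smul c f hf => rw [map_smul, LinearMap.smul_apply]; exact p.smul_mem c hf

private noncomputable def toMA (p : Submodule k V)
    (hp : ∀ h : H, ∀ v ∈ p, ρ h v ∈ p) : Submodule (MonoidAlgebra k H) ρ.asModule where
  carrier := (p : Set V)
  add_mem' := fun ha hb => p.add_mem ha hb
  zero_mem' := p.zero_mem
  smul_mem' := fun r x hx => asAlgebraHom_mem ρ p hp r hx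

private noncomputable def toK (q : Submodule (MonoidAlgebra k H) ρ.asModule) :
    Submodule k V where
  carrier := (q : Set ρ.asModule)
  add_mem' := fun ha hb => q.add_mem ha hb
  zero_mem' := q.zero_mem
  smul_mem' := fun c x hx => by
    let x' : ρ.asModule := x
    have hx' : x' ∈ q := hx
    have h := q.smul_mem (algebraMap k (MonoidAlgebra k H) c) hx'
    have h2 : (algebraMap k (MonoidAlgebra k H) c) • x' = c • x :=
      (ρ.asModuleEquiv_symm_map_smul c x).symm
    rwa [h2] at h

private lemma toK_stable (q : Submodule (MonoidAlgebra k H) ρ.asModule) :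
    ∀ h : H, ∀ v ∈ toK ρ q, ρ h v ∈ toK ρ q := by
  intro h v hv
  let v' : ρ.asModule := v
  have hv' : v' ∈ q := hv
  have hq := q.smul_mem (MonoidAlgebra.of k H h) hv'
  have h2 : (MonoidAlgebra.of k H h) • v' = ρ h v :=
    (ρ.asModuleEquiv_symm_map_rho h v).symm
  show ρ h v ∈ (q : Set ρ.asModule)
  rw [← h2]
  exact hq

private lemma coe_toK (q : Submodule (MonoidAlgebra k H) ρ.asModule) :
    (toK ρ q : Set V) = (q : Set ρ.asModule) := rfl

private lemma toK_injective : Function.Injective (toK ρ) := fun a b h =>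
  SetLike.ext' (by rw [← coe_toK, ← coe_toK, h])

private lemma toK_toMA (p : Submodule k V) (hp : ∀ h : H, ∀ v ∈ p, ρ h v ∈ p) :
    toK ρ (toMA ρ p hp) = p := SetLike.ext' rfl

private lemma toK_bot : toK ρ (⊥ : Submodule (MonoidAlgebra k H) ρ.asModule) = ⊥ :=
  SetLike.ext' rfl

private lemma toK_top : toK ρ (⊤ : Submodule (MonoidAlgebra k H) ρ.asModule) = ⊤ :=
  SetLike.ext' rfl

private lemma toK_sup (q q' : Submodule (MonoidAlgebra k H) ρ.asModule) :
    toK ρ (q ⊔ q') = toK ρ q ⊔ toK ρ q' := by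
  refine SetLike.ext' ?_
  rw [coe_toK, Submodule.coe_sup, Submodule.coe_sup, coe_toK, coe_toK]
  rfl

private lemma toK_inf (q q' : Submodule (MonoidAlgebra k H) ρ.asModule) :
    toK ρ (q ⊓ q') = toK ρ q ⊓ toK ρ q' := SetLike.ext' rfl

private lemma toMA_toK (q : Submodule (MonoidAlgebra k H) ρ.asModule) :
    toMA ρ (toK ρ q) (toK_stable ρ q) = q := SetLike.ext' rfl

end Corr

/-- **Flag characterization of semisimplicity** (the `GL(V)` case of complete
reducibility): a finite-dimensional `k`-linear representation `V` of a group `H`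
is semisimple iff every `H`-stable flag `0 = F 0 ⊂ F 1 ⊂ ⋯ ⊂ F n = V` admits an
`H`-stable splitting `V = W 0 ⊕ ⋯ ⊕ W (n-1)` with `F (i+1) = F i ⊕ W i`. -/
theorem semisimple_iff_every_stable_flag_splits
    {k V H : Type*} [Field k] [AddCommGroup V] [Module k V] [FiniteDimensional k V]
    [Group H] (ρ : Representation k H V) :
    IsSemisimpleModule (MonoidAlgebra k H) ρ.asModule ↔
      ∀ (n : ℕ) (F : Fin (n + 1) → Submodule k V),
        StrictMono F → F 0 = ⊥ → F (Fin.last n) = ⊤ →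
        (∀ i, ∀ h : H, ∀ v ∈ F i, ρ h v ∈ F i) →
        ∃ W : Fin n → Submodule k V,
          (∀ i, ∀ h : H, ∀ v ∈ W i, ρ h v ∈ W i) ∧
          iSupIndep W ∧
          ∀ i : Fin n, F i.succ = F i.castSucc ⊔ W i := by
  constructor
  · intro ss n F hmono hF0 hFtop hstab
    haveI := ss
    choose Q hQ using fun i : Fin n =>
      exists_isCompl (toMA ρ (F i.castSucc) (fun h v hv => hstab i.castSucc h v hv))
    have hdisj : ∀ i : Fin n, Disjoint (toK ρ (Q i)) (F i.castSucc) := by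
      intro i
      rw [disjoint_iff, ← toK_toMA ρ (F i.castSucc) (fun h v hv => hstab i.castSucc h v hv),
        ← toK_inf, ((hQ i).disjoint.symm).eq_bot, toK_bot]
    have hcod : ∀ i : Fin n, F i.castSucc ⊔ toK ρ (Q i) = ⊤ := by
      intro i
      rw [← toK_toMA ρ (F i.castSucc) (fun h v hv => hstab i.castSucc h v hv), ← toK_sup,
        (hQ i).codisjoint.eq_top, toK_top]
    refine ⟨fun i => toK ρ (Q i) ⊓ F i.succ, fun i h v hv => ?_, ?_, fun i => ?_⟩
    · rcases Submodule.mem_inf.1 hv with ⟨h1, h2⟩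
      exact Submodule.mem_inf.2 ⟨toK_stable ρ (Q i) h v h1, hstab i.succ h v h2⟩
    · exact indep_of_flag n F hmono.monotone _ (fun i => inf_le_right)
        (fun i => (hdisj i).mono_left inf_le_left)
    · have hle' : F i.castSucc ≤ F i.succ := hmono.monotone (Fin.castSucc_le_succ i)
      rw [← sup_inf_assoc_of_le _ hle', hcod i, top_inf_eq]
  · intro hsplit
    refine { toComplementedLattice := ⟨fun q => ?_⟩ }
    by_cases hb : q = ⊥
    · exact ⟨⊤, hb ▸ isCompl_bot_top⟩
    by_cases ht : q = ⊤
    · exact ⟨⊥, ht ▸ isCompl_top_bot⟩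
    set F : Fin 3 → Submodule k V := ![⊥, toK ρ q, ⊤] with hFdef
    have hqbot : toK ρ q ≠ ⊥ := fun hc => hb (toK_injective ρ (by rw [hc, toK_bot]))
    have hqtop : toK ρ q ≠ ⊤ := fun hc => ht (toK_injective ρ (by rw [hc, toK_top]))
    have hmono : StrictMono F := by
      rw [Fin.strictMono_iff_lt_succ]
      intro i
      fin_cases i
      · simpa [F] using bot_lt_iff_ne_bot.2 hqbot
      · simpa [F] using lt_top_iff_ne_top.2 hqtop
    have hstab : ∀ i, ∀ h : H, ∀ v ∈ F i, ρ h v ∈ F i := by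
      intro i h v hv
      fin_cases i
      · have hv' : v ∈ (⊥ : Submodule k V) := hv
        have : v = 0 := by simpa using hv'
        show ρ h v ∈ (⊥ : Submodule k V)
        simp [this]
      · exact toK_stable ρ q h v hv
      · exact Submodule.mem_top
    obtain ⟨W, hWstab, hWindep, hWsplit⟩ := hsplit 2 F hmono rfl rfl hstab
    have h0 : toK ρ q = W 0 := by
      have := hWsplit 0
      simpa [F] using this
    have h1 : (⊤ : Submodule k V) = toK ρ q ⊔ W 1 := by
      have := hWsplit 1
      simpa [F] using this
    have hdis : Disjoint (W 0) (W 1) := hWindep.pairwiseDisjoint (by decide)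
    refine ⟨toMA ρ (W 1) (hWstab 1), ?_, ?_⟩
    · rw [disjoint_iff]
      apply toK_injective ρ
      rw [toK_inf, toK_toMA, toK_bot, h0, hdis.eq_bot]
    · rw [codisjoint_iff]
      apply toK_injective ρ
      rw [toK_sup, toK_toMA, toK_top]
      exact h1.symm
end

section
/- Let k₁/k be a finite Galois extension with group Γ, V a finite-dimensional k-vector space, H a group acting k-linearly on V, and suppose every H-stable, Γ-stable flag of V ⊗_k k₁ admits an H-stable, Γ-stable splitting. If moreover V ⊗_k k₁ has an H-stable flag with no H-stable splitting (i.e. V ⊗_k k₁ is not semisimple), then there exists a nonzero proper H-stable, Γ-stable subspace of V ⊗_k k₁, and hence a nonzero proper H-stable k-subspace of V. -/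
open TensorProduct

/-- The semilinear action `id_V ⊗ γ` of a Galois automorphism on `k₁ ⊗[k] V`. -/
noncomputable def galoisTwist {k V k₁ : Type*} [CommRing k] [CommRing k₁]
    [Algebra k k₁] [AddCommGroup V] [Module k V] (γ : k₁ ≃ₐ[k] k₁) :
    k₁ ⊗[k] V →ₗ[k] k₁ ⊗[k] V :=
  LinearMap.rTensor V γ.toLinearMap

section

variable {k k₁ V H : Type*} [Field k] [Field k₁] [Algebra k k₁]
  [AddCommGroup V] [Module k V] [Group H]

/-- A submodule is stable under the `H`-action on `k₁ ⊗[k] V`. -/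
def HStable (ρ : Representation k H V) (W : Submodule k₁ (k₁ ⊗[k] V)) : Prop :=
  ∀ h : H, ∀ v ∈ W, ρ.extendScalars k₁ h v ∈ W

/-- A submodule is stable under the semilinear Galois action on `k₁ ⊗[k] V`. -/
def GalStable (W : Submodule k₁ (k₁ ⊗[k] V)) : Prop :=
  ∀ γ : k₁ ≃ₐ[k] k₁, ∀ v ∈ W, galoisTwist (V := V) γ v ∈ W

/-- `W` is an `H`-stable splitting of the flag `F`. -/
def IsSplitting {n : ℕ} (F : Fin (n + 1) → Submodule k₁ (k₁ ⊗[k] V))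
    (W : Fin n → Submodule k₁ (k₁ ⊗[k] V)) : Prop :=
  iSupIndep W ∧ ∀ i : Fin n, F i.succ = F i.castSucc ⊔ W i

/-- A flag of `k₁ ⊗[k] V`. -/
def IsFlag {n : ℕ} (F : Fin (n + 1) → Submodule k₁ (k₁ ⊗[k] V)) : Prop :=
  StrictMono F ∧ F 0 = ⊥ ∧ F (Fin.last n) = ⊤

end

section Aux

lemma aux_indep {α : Type*} [CompleteLattice α] [IsModularLattice α] :
    ∀ (n : ℕ) (W : Fin n → α),
      (∀ i, Disjoint (W i) (⨆ j, ⨆ _ : j.val < i.val, W j)) → iSupIndep W := by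
  intro n
  induction n with
  | zero => exact fun W _ i => i.elim0
  | succ n ih =>
    intro W hd
    have hW' : iSupIndep (fun j : Fin n => W j.castSucc) := by
      apply ih
      intro i
      refine (hd i.castSucc).mono_right (iSup₂_le fun j hj => ?_)
      exact le_iSup₂ (f := fun j _ => W j) j.castSucc (by simpa using hj)
    intro i
    rcases Fin.eq_castSucc_or_eq_last i with ⟨i₀, rfl⟩ | rfl
    · have h1 : Disjoint (W i₀.castSucc) (⨆ j : Fin n, ⨆ _ : j ≠ i₀, W j.castSucc) := hW' i₀
      have hT : (W i₀.castSucc ⊔ ⨆ j : Fin n, ⨆ _ : j ≠ i₀, W j.castSucc)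
          ≤ ⨆ j : Fin (n+1), ⨆ _ : j.val < n, W j := by
        apply sup_le
        · exact le_iSup₂ (f := fun (j : Fin (n+1)) (_ : j.val < n) => W j) i₀.castSucc i₀.isLt
        · exact iSup₂_le fun j _ =>
            le_iSup₂ (f := fun (j : Fin (n+1)) (_ : j.val < n) => W j) j.castSucc j.isLt
      have h2 : Disjoint (W i₀.castSucc ⊔ ⨆ j : Fin n, ⨆ _ : j ≠ i₀, W j.castSucc)
          (W (Fin.last n)) := by
        refine Disjoint.mono_left hT ?_
        simpa using (hd (Fin.last n)).symm
      have h3 := h1.disjoint_sup_right_of_disjoint_sup_left h2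
      refine h3.mono_right (iSup₂_le fun j hj => ?_)
      rcases Fin.eq_castSucc_or_eq_last j with ⟨j₀, rfl⟩ | rfl
      · refine le_trans ?_ le_sup_left
        exact le_iSup₂ (f := fun (j : Fin n) (_ : j ≠ i₀) => W j.castSucc) j₀
          (fun h => hj (by rw [h]))
      · exact le_sup_right
    · refine (hd (Fin.last n)).mono_right (iSup₂_le fun j hj => ?_)
      have hjn : j.val < n :=
        lt_of_le_of_ne (Nat.lt_succ_iff.mp j.isLt) (fun h => hj (Fin.ext h))
      exact le_iSup₂ (f := fun (j : Fin (n+1)) (_ : j.val < n) => W j) j hjn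

variable {k k₁ V H : Type*} [Field k] [Field k₁] [Algebra k k₁]
  [AddCommGroup V] [Module k V] [Group H]

lemma galoisTwist_tmul (γ : k₁ ≃ₐ[k] k₁) (a : k₁) (v : V) :
    galoisTwist γ (a ⊗ₜ[k] v) = γ a ⊗ₜ[k] v := rfl

lemma galoisTwist_smul (γ : k₁ ≃ₐ[k] k₁) (c : k₁) (x : k₁ ⊗[k] V) :
    galoisTwist γ (c • x) = γ c • galoisTwist γ x := by
  induction x using TensorProduct.induction_on with
  | zero => simp
  | tmul a v => rw [TensorProduct.smul_tmul']; simp [galoisTwist_tmul, TensorProduct.smul_tmul',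
      smul_eq_mul, map_mul]
  | add x y hx hy => simp [smul_add, map_add, hx, hy]

lemma galoisTwist_symm_twist (γ : k₁ ≃ₐ[k] k₁) (x : k₁ ⊗[k] V) :
    galoisTwist γ (galoisTwist γ.symm x) = x := by
  induction x using TensorProduct.induction_on with
  | zero => simp
  | tmul a v => simp [galoisTwist_tmul]
  | add x y hx hy => simp [map_add, hx, hy]

lemma galoisTwist_comm (γ : k₁ ≃ₐ[k] k₁) (ρ : Representation k H V) (h : H) (x : k₁ ⊗[k] V) :
    galoisTwist γ (ρ.extendScalars k₁ h x) = ρ.extendScalars k₁ h (galoisTwist γ x) := by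
  induction x using TensorProduct.induction_on with
  | zero => simp
  | tmul a v => simp [galoisTwist_tmul, Representation.extendScalars]
  | add x y hx hy => simp [map_add, hx, hy]

variable (ρ : Representation k H V)

/-- The image of a `k₁`-submodule of `k₁ ⊗[k] V` under the semilinear map `galoisTwist γ`. -/
noncomputable def galSub (γ : k₁ ≃ₐ[k] k₁) (W : Submodule k₁ (k₁ ⊗[k] V)) :
    Submodule k₁ (k₁ ⊗[k] V) where
  carrier := galoisTwist (V := V) γ '' W
  add_mem' := by rintro _ _ ⟨x, hx, rfl⟩ ⟨y, hy, rfl⟩; exact ⟨x + y, W.add_mem hx hy, map_add _ _ _⟩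
  zero_mem' := ⟨0, W.zero_mem, map_zero _⟩
  smul_mem' := by
    rintro c _ ⟨x, hx, rfl⟩
    exact ⟨γ.symm c • x, W.smul_mem _ hx, by rw [galoisTwist_smul]; simp⟩

lemma mem_galSub {γ : k₁ ≃ₐ[k] k₁} {W : Submodule k₁ (k₁ ⊗[k] V)} {x : k₁ ⊗[k] V} :
    x ∈ galSub γ W ↔ ∃ y ∈ W, galoisTwist (V := V) γ y = x := Iff.rfl

lemma galSub_mono (γ : k₁ ≃ₐ[k] k₁) {W U : Submodule k₁ (k₁ ⊗[k] V)} (h : W ≤ U) :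
    galSub γ W ≤ galSub γ U := by
  rintro _ ⟨x, hx, rfl⟩; exact ⟨x, h hx, rfl⟩

lemma galSub_galSub_symm (γ : k₁ ≃ₐ[k] k₁) (W : Submodule k₁ (k₁ ⊗[k] V)) :
    galSub γ (galSub γ.symm W) = W := by
  ext x
  constructor
  · rintro ⟨_, ⟨y, hy, rfl⟩, rfl⟩
    rwa [galoisTwist_symm_twist]
  · intro hx
    exact ⟨galoisTwist γ.symm x, ⟨x, hx, rfl⟩, galoisTwist_symm_twist γ x⟩

lemma galSub_symm_galSub (γ : k₁ ≃ₐ[k] k₁) (W : Submodule k₁ (k₁ ⊗[k] V)) :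
    galSub γ.symm (galSub γ W) = W := by
  simpa using galSub_galSub_symm γ.symm W

lemma galSub_bot (γ : k₁ ≃ₐ[k] k₁) : galSub γ (⊥ : Submodule k₁ (k₁ ⊗[k] V)) = ⊥ := by
  ext x
  simp [mem_galSub, eq_comm]

variable {ρ} in
lemma hstable_galSub {γ : k₁ ≃ₐ[k] k₁} {W : Submodule k₁ (k₁ ⊗[k] V)} (hW : HStable ρ W) :
    HStable ρ (galSub γ W) := by
  rintro h _ ⟨x, hx, rfl⟩
  exact ⟨ρ.extendScalars k₁ h x, hW h x hx, galoisTwist_comm γ ρ h x⟩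

lemma hstable_sSup {s : Set (Submodule k₁ (k₁ ⊗[k] V))} (hs : ∀ W ∈ s, HStable ρ W) :
    HStable ρ (sSup s) := by
  intro h v hv
  have hle : sSup s ≤ Submodule.comap (ρ.extendScalars k₁ h) (sSup s) := by
    refine sSup_le fun W hW => ?_
    intro x hx
    exact Submodule.mem_comap.2 (Submodule.mem_sSup_of_mem hW (hs W hW h x hx))
  exact hle hv

lemma hstable_inf {p q : Submodule k₁ (k₁ ⊗[k] V)} (hp : HStable ρ p) (hq : HStable ρ q) :
    HStable ρ (p ⊓ q) := fun h v hv =>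
  Submodule.mem_inf.2 ⟨hp h v (Submodule.mem_inf.1 hv).1, hq h v (Submodule.mem_inf.1 hv).2⟩

/-- A minimal nonzero `H`-stable submodule. -/
def SAtom (W : Submodule k₁ (k₁ ⊗[k] V)) : Prop :=
  HStable ρ W ∧ W ≠ ⊥ ∧ ∀ U, HStable ρ U → U < W → U = ⊥

variable {ρ} in
lemma sAtom_galSub {γ : k₁ ≃ₐ[k] k₁} {W : Submodule k₁ (k₁ ⊗[k] V)} (hW : SAtom ρ W) :
    SAtom ρ (galSub γ W) := by
  obtain ⟨h1, h2, h3⟩ := hW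
  refine ⟨hstable_galSub h1, fun hb => h2 ?_, fun U hU hlt => ?_⟩
  · rw [← galSub_symm_galSub γ W, hb, galSub_bot]
  · have hlt' : galSub γ.symm U < W := by
      refine lt_of_le_of_ne (by simpa [galSub_symm_galSub] using galSub_mono γ.symm hlt.le) ?_
      intro hEq
      exact hlt.ne (by rw [← hEq, galSub_galSub_symm])
    have := h3 _ (hstable_galSub (γ := γ.symm) hU) hlt'
    rw [← galSub_galSub_symm γ U, this, galSub_bot]

end Aux

set_option linter.unusedSectionVars false
section Aux2
variable {k k₁ V H : Type*} [Field k] [Field k₁] [Algebra k k₁]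
  [AddCommGroup V] [Module k V] [Group H] [FiniteDimensional k k₁] [FiniteDimensional k V]
variable (ρ : Representation k H V)

lemma hstable_bot : HStable ρ (⊥ : Submodule k₁ (k₁ ⊗[k] V)) := by
  intro h x hx
  rw [Submodule.mem_bot] at hx ⊢
  simp [hx]

lemma hstable_sup {p q : Submodule k₁ (k₁ ⊗[k] V)} (hp : HStable ρ p) (hq : HStable ρ q) :
    HStable ρ (p ⊔ q) := by
  intro h v hv
  have hle : p ⊔ q ≤ Submodule.comap (ρ.extendScalars k₁ h) (p ⊔ q) := by
    refine sup_le (fun x hx => ?_) (fun x hx => ?_)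
    · exact Submodule.mem_comap.2 (Submodule.mem_sup_left (hp h x hx))
    · exact Submodule.mem_comap.2 (Submodule.mem_sup_right (hq h x hx))
  exact hle hv

lemma galSub_socle (γ : k₁ ≃ₐ[k] k₁) :
    galSub γ (sSup {W | SAtom ρ W}) = sSup {W | SAtom ρ W} := by
  apply le_antisymm
  · have : sSup {W | SAtom ρ W} ≤ galSub γ.symm (sSup {W | SAtom ρ W}) := by
      refine sSup_le fun W hW => ?_
      rw [← galSub_symm_galSub γ W]
      exact galSub_mono γ.symm (le_sSup (sAtom_galSub hW))
    calc galSub γ (sSup {W | SAtom ρ W}) ≤ galSub γ (galSub γ.symm (sSup {W | SAtom ρ W})) :=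
          galSub_mono γ this
      _ = _ := galSub_galSub_symm γ _
  · refine sSup_le fun W hW => ?_
    rw [← galSub_galSub_symm γ W]
    exact galSub_mono γ (le_sSup (sAtom_galSub hW))

lemma hstable_socle : HStable ρ (sSup {W : Submodule k₁ (k₁ ⊗[k] V) | SAtom ρ W}) :=
  hstable_sSup ρ fun _ hW => hW.1

lemma galStable_socle : GalStable (sSup {W | SAtom ρ W} : Submodule k₁ (k₁ ⊗[k] V)) := by
  intro γ v hv
  rw [← galSub_socle ρ γ]
  exact ⟨v, hv, rfl⟩

/-- Any nonzero `H`-stable submodule contains a minimal one. -/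
lemma exists_sAtom_le {W : Submodule k₁ (k₁ ⊗[k] V)} (hW : HStable ρ W) (h0 : W ≠ ⊥) :
    ∃ A, SAtom ρ A ∧ A ≤ W := by
  obtain ⟨A, ⟨hA1, hA2, hA3⟩, hmin⟩ :=
    (IsWellFounded.wf (r := ((· < ·) : Submodule k₁ (k₁ ⊗[k] V) → _ → Prop))).has_min
      {U | HStable ρ U ∧ U ≠ ⊥ ∧ U ≤ W} ⟨W, hW, h0, le_rfl⟩
  refine ⟨A, ⟨hA1, hA2, fun U hU hlt => ?_⟩, hA3⟩
  by_contra hUne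
  exact hmin U ⟨hU, hUne, hlt.le.trans hA3⟩ hlt

/-- If the socle is everything, every `H`-stable submodule has an `H`-stable complement. -/
lemma exists_hstable_compl (hsoc : sSup {W | SAtom ρ W} = (⊤ : Submodule k₁ (k₁ ⊗[k] V)))
    {p : Submodule k₁ (k₁ ⊗[k] V)} (hp : HStable ρ p) :
    ∃ c, HStable ρ c ∧ Disjoint p c ∧ p ⊔ c = ⊤ := by
  obtain ⟨c, ⟨hc1, hc2⟩, hmax⟩ :=
    (IsWellFounded.wf (r := ((· > ·) : Submodule k₁ (k₁ ⊗[k] V) → _ → Prop))).has_min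
      {c | HStable ρ c ∧ Disjoint p c} ⟨⊥, hstable_bot ρ, disjoint_bot_right⟩
  refine ⟨c, hc1, hc2, ?_⟩
  by_contra hne
  have hA : ∃ A, SAtom ρ A ∧ ¬ A ≤ p ⊔ c := by
    by_contra hA
    push_neg at hA
    exact hne (top_le_iff.mp (hsoc ▸ sSup_le fun W hW => hA W hW))
  obtain ⟨A, hA, hAle⟩ := hA
  have hdisj : Disjoint (p ⊔ c) A := by
    rw [disjoint_comm, disjoint_iff]
    refine hA.2.2 _ (hstable_inf ρ hA.1 (hstable_sup ρ hp hc1)) ?_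
    exact lt_of_le_of_ne inf_le_left (fun hEq => hAle (hEq ▸ inf_le_right))
  have hdisj' : Disjoint p (c ⊔ A) := hc2.disjoint_sup_right_of_disjoint_sup_left hdisj
  refine hmax _ ⟨hstable_sup ρ hc1 hA.1, hdisj'⟩
    (lt_of_le_of_ne le_sup_left fun hEq => ?_)
  exact hAle (((le_sup_right : A ≤ c ⊔ A).trans hEq.symm.le).trans le_sup_right)

/-- Relative complements. -/
lemma exists_hstable_relcompl (hsoc : sSup {W | SAtom ρ W} = (⊤ : Submodule k₁ (k₁ ⊗[k] V)))
    {p q : Submodule k₁ (k₁ ⊗[k] V)} (hp : HStable ρ p) (hq : HStable ρ q) (hpq : p ≤ q) :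
    ∃ w, HStable ρ w ∧ w ≤ q ∧ Disjoint p w ∧ p ⊔ w = q := by
  obtain ⟨c, hc1, hc2, hc3⟩ := exists_hstable_compl ρ hsoc hp
  refine ⟨q ⊓ c, hstable_inf ρ hq hc1, inf_le_left, hc2.mono_right inf_le_right, ?_⟩
  rw [inf_comm, ← sup_inf_assoc_of_le c hpq, hc3, top_inf_eq]
end Aux2

section Aux3
variable {k k₁ V H : Type*} [Field k] [Field k₁] [Algebra k k₁]
  [FiniteDimensional k k₁] [IsGalois k k₁]
  [AddCommGroup V] [Module k V] [FiniteDimensional k V] [Group H]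

/-- Galois descent of a stable subspace. -/
lemma descend (ρ : Representation k H V) (Wl : Submodule k₁ (k₁ ⊗[k] V))
    (h0 : Wl ≠ ⊥) (h1 : Wl ≠ ⊤) (hH : HStable ρ Wl) (hG : GalStable Wl) :
    ∃ W₀ : Submodule k V, W₀ ≠ ⊥ ∧ W₀ ≠ ⊤ ∧ ∀ h : H, ∀ v ∈ W₀, ρ h v ∈ W₀ := by
  classical
  set W₀ : Submodule k V :=
    Submodule.comap ((TensorProduct.mk k k₁ V) 1) (Wl.restrictScalars k) with hW₀
  have hmem : ∀ v : V, v ∈ W₀ ↔ (1 : k₁) ⊗ₜ[k] v ∈ Wl := fun v => Iff.rfl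
  refine ⟨W₀, ?_, ?_, ?_⟩
  · -- nonempty : use trace argument
    obtain ⟨w, hwW, hw0⟩ := Submodule.exists_mem_ne_zero_of_ne_bot h0
    set b := Module.finBasis k V with hb
    set B := Algebra.TensorProduct.basis k₁ b with hB
    obtain ⟨j, hj⟩ : ∃ j, B.repr w j ≠ 0 := by
      by_contra hall
      push_neg at hall
      exact hw0 ((LinearEquiv.map_eq_zero_iff B.repr).mp (Finsupp.ext hall))
    obtain ⟨c, hc⟩ : ∃ c : k₁, Algebra.trace k k₁ (c * B.repr w j) ≠ 0 := by
      by_contra hall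
      push_neg at hall
      refine hj ((traceForm_nondegenerate k k₁).1 (B.repr w j) fun c => ?_)
      rw [Algebra.traceForm_apply, mul_comm]
      exact hall c
    set P : (k₁ ⊗[k] V) →ₗ[k] (k₁ ⊗[k] V) := ∑ γ : k₁ ≃ₐ[k] k₁, galoisTwist γ with hP
    have hPapp : ∀ x, P x = ∑ γ : k₁ ≃ₐ[k] k₁, galoisTwist (V := V) γ x := by
      intro x; rw [hP]; simp [LinearMap.sum_apply]
    have hPW : ∀ x ∈ Wl, P x ∈ Wl := by
      intro x hx
      rw [hPapp]
      exact Submodule.sum_mem _ fun γ _ => hG γ x hx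
    have hPtmul : ∀ (a : k₁) (v : V),
        P (a ⊗ₜ[k] v) = (1 : k₁) ⊗ₜ[k] (Algebra.trace k k₁ a • v) := by
      intro a v
      rw [hPapp]
      have h1 : ∀ γ : k₁ ≃ₐ[k] k₁, galoisTwist (V := V) γ (a ⊗ₜ[k] v) = γ a ⊗ₜ[k] v :=
        fun γ => rfl
      simp_rw [h1]
      rw [← TensorProduct.sum_tmul, ← trace_eq_sum_automorphisms,
        Algebra.algebraMap_eq_smul_one, ← TensorProduct.smul_tmul']
      exact (TensorProduct.tmul_smul _ _ _).symm
    set u := c • w with hu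
    have huW : u ∈ Wl := Wl.smul_mem c hwW
    set v₀ : V := ∑ i, Algebra.trace k k₁ (B.repr u i) • b i with hv₀
    have hPu : P u = (1 : k₁) ⊗ₜ[k] v₀ := by
      conv_lhs => rw [← B.sum_repr u]
      rw [map_sum]
      have h2 : ∀ i, P (B.repr u i • B i)
          = (1 : k₁) ⊗ₜ[k] (Algebra.trace k k₁ (B.repr u i) • b i) := by
        intro i
        have hBi : B.repr u i • B i = (B.repr u i) ⊗ₜ[k] (b i) := by
          rw [hB, Algebra.TensorProduct.basis_apply, TensorProduct.smul_tmul',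
            smul_eq_mul, mul_one]
        rw [hBi, hPtmul]
      simp_rw [h2]
      rw [hv₀, TensorProduct.tmul_sum]
    have hcoord : B.repr u j = c * B.repr w j := by
      rw [hu, map_smul]; simp
    have hv₀ne : v₀ ≠ 0 := by
      intro hzero
      apply hc
      have h3 : b.repr v₀ j = Algebra.trace k k₁ (B.repr u j) := by
        rw [hv₀]
        simp [map_sum, map_smul, Module.Basis.repr_self, Finsupp.smul_single, Finsupp.single_apply]
      rw [← hcoord, ← h3, hzero]
      simp
    rw [Submodule.ne_bot_iff]
    refine ⟨v₀, ?_, hv₀ne⟩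
    rw [hmem, ← hPu]
    exact hPW u huW
  · intro hW
    apply h1
    rw [eq_top_iff]
    intro x _
    induction x using TensorProduct.induction_on with
    | zero => exact Wl.zero_mem
    | tmul a v =>
      have hv : (1 : k₁) ⊗ₜ[k] v ∈ Wl := (hmem v).1 (hW ▸ Submodule.mem_top)
      have : a ⊗ₜ[k] v = a • ((1 : k₁) ⊗ₜ[k] v) := by
        rw [TensorProduct.smul_tmul', smul_eq_mul, mul_one]
      rw [this]
      exact Wl.smul_mem a hv
    | add x y hx hy => exact Wl.add_mem (hx Submodule.mem_top) (hy Submodule.mem_top)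
  · intro h v hv
    rw [hmem] at hv ⊢
    have := hH h _ hv
    simpa [Representation.extendScalars] using this
end Aux3

/-- **The `GL(V)` instance of the main argument.**  Let `k₁/k` be a finite Galois
extension with group `Γ`.  Suppose every `H`-stable, `Γ`-stable flag of
`V ⊗[k] k₁` admits an `H`-stable, `Γ`-stable splitting, while some `H`-stable
flag of `V ⊗[k] k₁` has no `H`-stable splitting (i.e. `V ⊗[k] k₁` is not
semisimple).  Then there is a nonzero proper `H`-stable, `Γ`-stable subspace of
`V ⊗[k] k₁`, and hence a nonzero proper `H`-stable `k`-subspace of `V`. -/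
theorem exists_stable_proper_subspace_of_not_semisimple
    {k k₁ V H : Type*} [Field k] [Field k₁] [Algebra k k₁]
    [FiniteDimensional k k₁] [IsGalois k k₁]
    [AddCommGroup V] [Module k V] [FiniteDimensional k V] [Group H]
    (ρ : Representation k H V)
    (hsplit : ∀ (n : ℕ) (F : Fin (n + 1) → Submodule k₁ (k₁ ⊗[k] V)),
      IsFlag F → (∀ i, HStable ρ (F i)) → (∀ i, GalStable (F i)) →
      ∃ W : Fin n → Submodule k₁ (k₁ ⊗[k] V),
        (∀ i, HStable ρ (W i)) ∧ (∀ i, GalStable (W i)) ∧ IsSplitting F W)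
    (hns : ∃ (n : ℕ) (F : Fin (n + 1) → Submodule k₁ (k₁ ⊗[k] V)),
      IsFlag F ∧ (∀ i, HStable ρ (F i)) ∧
      ¬ ∃ W : Fin n → Submodule k₁ (k₁ ⊗[k] V),
          (∀ i, HStable ρ (W i)) ∧ IsSplitting F W) :
    (∃ W : Submodule k₁ (k₁ ⊗[k] V),
        W ≠ ⊥ ∧ W ≠ ⊤ ∧ HStable ρ W ∧ GalStable W) ∧
      ∃ W₀ : Submodule k V, W₀ ≠ ⊥ ∧ W₀ ≠ ⊤ ∧ ∀ h : H, ∀ v ∈ W₀, ρ h v ∈ W₀ := by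
  classical
  obtain ⟨n, F, hFlag, hFst, hno⟩ := hns
  have hnontriv : Nontrivial (k₁ ⊗[k] V) := by
    rcases n with _ | m
    · exact absurd ⟨Fin.elim0, fun i => i.elim0, fun i => i.elim0, fun i => i.elim0⟩ hno
    · have hbotlt : F 0 < F (Fin.last (m + 1)) := hFlag.1 (by rw [Fin.lt_def]; simp)
      rw [hFlag.2.1, hFlag.2.2] at hbotlt
      obtain ⟨x, -, hx⟩ := SetLike.exists_of_lt hbotlt
      exact nontrivial_of_ne x 0 fun hEq => hx (hEq ▸ Submodule.zero_mem ⊥)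
  set Soc := sSup {W : Submodule k₁ (k₁ ⊗[k] V) | SAtom ρ W} with hSocDef
  have hSocH : HStable ρ Soc := hstable_socle ρ
  have hSocG : GalStable Soc := galStable_socle ρ
  have hSocne : Soc ≠ ⊥ := by
    obtain ⟨A, hA, -⟩ :=
      exists_sAtom_le ρ (W := (⊤ : Submodule k₁ (k₁ ⊗[k] V)))
        (fun h v _ => Submodule.mem_top) (by simp)
    exact fun hbot => hA.2.1 (le_bot_iff.mp (hbot ▸ le_sSup hA))
  have hSocnetop : Soc ≠ ⊤ := by
    intro hsoc
    apply hno
    choose W hW1 hW2 hW3 hW4 using fun i : Fin n =>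
      exists_hstable_relcompl ρ hsoc (hFst i.castSucc) (hFst i.succ)
        (hFlag.1.monotone (Fin.castSucc_le_succ i))
    refine ⟨W, hW1, ?_, fun i => (hW4 i).symm⟩
    apply aux_indep
    intro i
    refine ((hW3 i).symm).mono_right (iSup₂_le fun l hl => ?_)
    refine (hW2 l).trans (hFlag.1.monotone ?_)
    rw [Fin.le_def]
    simpa using hl
  exact ⟨⟨Soc, hSocne, hSocnetop, hSocH, hSocG⟩,
    descend ρ Soc hSocne hSocnetop hSocH hSocG⟩
end
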